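/- For every integer p ≥ 4, the (4p × 3p) column-clique grid is a co-comparability graph (the column-by-column ordering v_{1,1}, v_{2,1}, …, v_{4p,1}, v_{1,2}, …, v_{4p,3p} is a co-comparability ordering). Consequently, for n = 12p², there is an n-vertex co-comparability graph with mim-width at least √(n/12), so co-comparability graphs have unbounded mim-width. -/

import Mathlib

open SimpleGraph
open scoped Classical

noncomputable section

/-- The graph `K_t ⊠ S_t`: a clique of size `t` (the `inl` part), an independent set of
size `t` (the `inr` part), joined by a perfect matching. -/
def ktst (t : ℕ) : SimpleGraph (Fin t ⊕ Fin t) :=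
  SimpleGraph.fromRel (fun x y =>
    match x, y with
    | Sum.inl i, Sum.inl j => i ≠ j
    | Sum.inl i, Sum.inr j => i = j
    | _, _ => False)

/-- The graph `K_t ⊠ K_t`: two cliques of size `t` joined by a perfect matching. -/
def ktkt (t : ℕ) : SimpleGraph (Fin t ⊕ Fin t) :=
  SimpleGraph.fromRel (fun x y =>
    match x, y with
    | Sum.inl i, Sum.inl j => i ≠ j
    | Sum.inr i, Sum.inr j => i ≠ j
    | Sum.inl i, Sum.inr j => i = j
    | _, _ => False)

/-- The cycle graph on `ZMod n`. -/
def cycleG (n : ℕ) : SimpleGraph (ZMod n) :=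
  SimpleGraph.fromRel (fun x y => y = x + 1)

/-- `σ` enumerates the vertices of `G` as a co-comparability ordering. -/
def IsCoCompOrdering {V : Type} {n : ℕ} (G : SimpleGraph V) (σ : Fin n ≃ V) : Prop :=
  ∀ i j k : Fin n, i < j → j < k → G.Adj (σ i) (σ k) →
    G.Adj (σ j) (σ i) ∨ G.Adj (σ j) (σ k)

/-- `G` contains `H` as an induced subgraph. -/
def ContainsInducedIso {V W : Type} (G : SimpleGraph V) (H : SimpleGraph W) : Prop :=
  ∃ f : W → V, Function.Injective f ∧ ∀ x y, H.Adj x y ↔ G.Adj (f x) (f y)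

/-- A graph is chordal iff it has no induced cycle of length at least 4. -/
def Chordal {V : Type} (G : SimpleGraph V) : Prop :=
  ∀ n, 4 ≤ n → ¬ ContainsInducedIso G (cycleG n)

/-- `G` contains `H` as an induced minor (via an induced minor model). -/
def HasInducedMinor {V W : Type} (G : SimpleGraph V) (H : SimpleGraph W) : Prop :=
  ∃ S : W → Set V,
    (∀ w, (G.induce (S w)).Connected) ∧
    (∀ w w', w ≠ w' → Disjoint (S w) (S w')) ∧
    (∀ w w', H.Adj w w' → ∃ a ∈ S w, ∃ b ∈ S w', G.Adj a b) ∧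
    (∀ w w', w ≠ w' → ¬ H.Adj w w' → ∀ a ∈ S w, ∀ b ∈ S w', ¬ G.Adj a b)

/-- `G` contains `K_t` as a minor (branch sets). -/
def HasCliqueMinor {V : Type} (G : SimpleGraph V) (t : ℕ) : Prop :=
  ∃ S : Fin t → Set V,
    (∀ i, (G.induce (S i)).Connected) ∧
    (∀ i j, i ≠ j → Disjoint (S i) (S j)) ∧
    (∀ i j, i ≠ j → ∃ a ∈ S i, ∃ b ∈ S j, G.Adj a b)

/-- There is an induced matching of `G` of size `m` between `A` and its complement:
the `2m` matched vertices induce exactly the `m` matching edges in `G`. -/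
def IsSimMatching {V : Type} (G : SimpleGraph V) (A : Set V) (m : ℕ) : Prop :=
  ∃ a b : Fin m → V,
    Function.Injective a ∧ Function.Injective b ∧
    (∀ i, a i ∈ A) ∧ (∀ i, b i ∉ A) ∧
    (∀ i j, G.Adj (a i) (b j) ↔ i = j) ∧
    (∀ i j, ¬ G.Adj (a i) (a j)) ∧
    (∀ i j, ¬ G.Adj (b i) (b j))

/-- There is an induced matching of size `m` in the bipartite graph `G[A, V \ A]`
of edges crossing the cut. -/
def IsMimMatching {V : Type} (G : SimpleGraph V) (A : Set V) (m : ℕ) : Prop :=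
  ∃ a b : Fin m → V,
    Function.Injective a ∧ Function.Injective b ∧
    (∀ i, a i ∈ A) ∧ (∀ i, b i ∉ A) ∧
    (∀ i j, G.Adj (a i) (b j) ↔ i = j)

def simval {V : Type} (G : SimpleGraph V) (A : Set V) : ℕ :=
  sSup {m | IsSimMatching G A m}

def mimval {V : Type} (G : SimpleGraph V) (A : Set V) : ℕ :=
  sSup {m | IsMimMatching G A m}

/-- GF(2)-rank of the `A × Aᶜ` submatrix of the adjacency matrix: the dimension of the
span of the rows of that submatrix (rows extended by zero on columns of `A`). -/
def cutrk {V : Type} [Fintype V] (G : SimpleGraph V) (A : Set V) : ℕ :=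
  Module.finrank (ZMod 2) (Submodule.span (ZMod 2)
    {r : V → ZMod 2 | ∃ a ∈ A, r = fun v => if v ∉ A ∧ G.Adj a v then 1 else 0})

/-- A branch-decomposition of a graph on vertex set `V`: a finite subcubic tree together
with an injection of `V` onto its leaves. -/
structure BranchDecomp (V : Type) [Fintype V] where
  β : Type
  finβ : Fintype β
  T : SimpleGraph β
  connected : T.Connected
  acyclic : T.IsAcyclic
  subcubic : ∀ x : β, (T.neighborSet x).ncard = 1 ∨ (T.neighborSet x).ncard = 3
  L : V → β
  inj : Function.Injective L
  leaves : ∀ x : β, (T.neighborSet x).ncard = 1 ↔ ∃ v, L v = x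

/-- The side of the cut induced by the tree edge `xy`, on the side of `x`. -/
def BranchDecomp.cut {V : Type} [Fintype V] (D : BranchDecomp V) (x y : D.β) : Set V :=
  {v | (D.T.deleteEdges {s(x, y)}).Reachable (D.L v) x}

/-- The `f`-width of a graph on vertex set `V`: minimum over branch-decompositions of the
maximum of `f` over the cuts of the decomposition. -/
def fWidth {V : Type} [Fintype V] (f : Set V → ℕ) : ℕ :=
  sInf {w | ∃ D : BranchDecomp V, ∀ x y, D.T.Adj x y → f (D.cut x y) ≤ w}

def simw {V : Type} [Fintype V] (G : SimpleGraph V) : ℕ := fWidth (simval G)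
def mimw {V : Type} [Fintype V] (G : SimpleGraph V) : ℕ := fWidth (mimval G)
def rankw {V : Type} [Fintype V] (G : SimpleGraph V) : ℕ := fWidth (cutrk G)

/-- Contraction of the edge `v₁v₂`: the vertex `v₂` is removed and `v₁` plays the role of
the contracted vertex `z`, adjacent to all former neighbors of `v₁` or `v₂`. -/
def contractE {V : Type} (G : SimpleGraph V) (v1 v2 : V) : SimpleGraph {v : V // v ≠ v2} :=
  SimpleGraph.fromRel (fun x y =>
    G.Adj x y ∨ ((x : V) = v1 ∧ G.Adj v2 y) ∨ ((y : V) = v1 ∧ G.Adj (x : V) v2))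

/-- The `(p × q)` column-clique grid. -/
def ccGrid (p q : ℕ) : SimpleGraph (Fin p × Fin q) :=
  SimpleGraph.fromRel (fun u v =>
    (u.2 = v.2) ∨ (u.1 = v.1 ∧ ((u.2 : ℕ) + 1 = v.2 ∨ (v.2 : ℕ) + 1 = u.2)))

/-- The `(p × q)` Hsu-clique chain graph. -/
def hsu (p q : ℕ) : SimpleGraph (Fin p × Fin q) :=
  SimpleGraph.fromRel (fun u v =>
    (u.2 = v.2) ∨ ((u.2 : ℕ) + 1 = v.2 ∧ u.1 ≤ v.1))

/-- The `(k × k)` grid graph. -/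
def gridG (k : ℕ) : SimpleGraph (Fin k × Fin k) :=
  SimpleGraph.fromRel (fun u v =>
    (u.1 = v.1 ∧ (u.2 : ℕ) + 1 = v.2) ∨ (u.2 = v.2 ∧ (u.1 : ℕ) + 1 = v.1))

/-- A tree-decomposition of `G`. -/
structure TreeDecomp (V : Type) (G : SimpleGraph V) where
  β : Type
  finβ : Fintype β
  T : SimpleGraph β
  connected : T.Connected
  acyclic : T.IsAcyclic
  B : β → Set V
  coverV : ∀ v : V, ∃ t, v ∈ B t
  coverE : ∀ u v, G.Adj u v → ∃ t, u ∈ B t ∧ v ∈ B t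
  coherent : ∀ v : V, (T.induce {t | v ∈ B t}).Connected

/-- Tree-width. -/
def tw {V : Type} (G : SimpleGraph V) : ℕ :=
  sInf {k | ∃ D : TreeDecomp V G, ∀ t, (D.B t).ncard ≤ k + 1}

/-- `G` is `d`-degenerate: every (induced) subgraph has a vertex of degree at most `d`. -/
def Degenerate {V : Type} (G : SimpleGraph V) (d : ℕ) : Prop :=
  ∀ S : Set V, S.Nonempty → ∃ v ∈ S, {u ∈ S | G.Adj v u}.ncard ≤ d

/-- Every graph on `N` vertices contains a clique of size `k` or an independent set of
size `l`. -/
def ramseyProp (N k l : ℕ) : Prop :=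
  ∀ G : SimpleGraph (Fin N),
    (∃ s : Finset (Fin N), G.IsNClique k s) ∨ (∃ s : Finset (Fin N), Gᶜ.IsNClique l s)

/-- The Ramsey number `R(k, l)`. -/
def ramsey (k l : ℕ) : ℕ := sInf {N | ramseyProp N k l}

/-- `G` is a circle graph: the intersection graph of chords of a circle, equivalently the
overlap graph of a family of intervals with pairwise distinct endpoints. -/
def IsCircleGraph {V : Type} (G : SimpleGraph V) : Prop :=
  ∃ a b : V → ℝ, (∀ v, a v < b v) ∧
    (∀ v w : V, v ≠ w → a v ≠ a w ∧ a v ≠ b w ∧ b v ≠ a w ∧ b v ≠ b w) ∧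
    (∀ v w, G.Adj v w ↔
      (a v < a w ∧ a w < b v ∧ b v < b w) ∨ (a w < a v ∧ a v < b w ∧ b w < b v))

/-- Vertex set of the split graph witnessing unbounded mim-width: a clique `Fin m`
together with one independent vertex for each nonempty subset of the clique. -/
abbrev splitV (m : ℕ) := Fin m ⊕ {S : Finset (Fin m) // S.Nonempty}

/-- The split graph with clique of size `m` and an independent set of size `2^m - 1`
whose vertices have pairwise distinct nonempty neighborhoods in the clique. -/
def splitG (m : ℕ) : SimpleGraph (splitV m) :=
  SimpleGraph.fromRel (fun x y =>
    match x, y with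
    | Sum.inl i, Sum.inl j => i ≠ j
    | Sum.inl i, Sum.inr S => i ∈ S.1
    | _, _ => False)

end



noncomputable section AuxProof

lemma ccGrid_adj {p q : ℕ} {u v : Fin p × Fin q} :
    (ccGrid p q).Adj u v ↔ u ≠ v ∧ ((u.2 = v.2) ∨
      (u.1 = v.1 ∧ ((u.2 : ℕ) + 1 = v.2 ∨ (v.2 : ℕ) + 1 = u.2))) := by
  constructor
  · rintro ⟨hne, h | h⟩
    · exact ⟨hne, h⟩
    · refine ⟨hne, ?_⟩
      rcases h with h | ⟨h1, h2⟩
      · exact Or.inl h.symm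
      · exact Or.inr ⟨h1.symm, h2.symm⟩
  · rintro ⟨hne, h⟩
    exact ⟨hne, Or.inl h⟩

/-- column-major equivalence: index `u` ↦ (row `u % a`, column `u / a`). -/
def colEquiv (a b : ℕ) (ha : 0 < a) : Fin (a * b) ≃ Fin a × Fin b where
  toFun u := (⟨(u : ℕ) % a, Nat.mod_lt _ ha⟩,
    ⟨(u : ℕ) / a, by
      have := u.isLt
      exact Nat.div_lt_of_lt_mul (by omega)⟩)
  invFun rc := ⟨(rc.2 : ℕ) * a + (rc.1 : ℕ), by
      have h2 := rc.2.isLt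
      have h1 := rc.1.isLt
      calc (rc.2 : ℕ) * a + (rc.1 : ℕ) < (rc.2 : ℕ) * a + a := by omega
        _ = ((rc.2 : ℕ) + 1) * a := by ring
        _ ≤ b * a := Nat.mul_le_mul_right a h2
        _ = a * b := Nat.mul_comm _ _⟩
  left_inv u := by
    ext
    simp only []
    exact Nat.div_add_mod' (u : ℕ) a
  right_inv rc := by
    have h1 := rc.1.isLt
    have hmod : ((rc.2 : ℕ) * a + (rc.1 : ℕ)) % a = (rc.1 : ℕ) := by
      rw [Nat.mul_comm, Nat.mul_add_mod]
      exact Nat.mod_eq_of_lt h1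
    have hdiv : ((rc.2 : ℕ) * a + (rc.1 : ℕ)) / a = (rc.2 : ℕ) := by
      rw [Nat.mul_comm, Nat.mul_add_div ha, Nat.div_eq_of_lt h1]
      omega
    ext <;> simpa [Nat.mod_eq_of_lt h1]

lemma part1 (p : ℕ) (hp : 4 ≤ p) :
    ∃ σ : Fin (12 * p ^ 2) ≃ Fin (4 * p) × Fin (3 * p),
      IsCoCompOrdering (ccGrid (4 * p) (3 * p)) σ := by
  have hpos : 0 < 4 * p := by omega
  have hcast : 12 * p ^ 2 = 4 * p * (3 * p) := by ring
  refine ⟨(finCongr hcast).trans (colEquiv (4 * p) (3 * p) hpos), ?_⟩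
  intro i j k hij hjk hadj
  set σ := (finCongr hcast).trans (colEquiv (4 * p) (3 * p) hpos) with hσ
  have hval : ∀ m : Fin (12 * p ^ 2),
      ((σ m).1 : ℕ) = (m : ℕ) % (4 * p) ∧ ((σ m).2 : ℕ) = (m : ℕ) / (4 * p) := by
    intro m; exact ⟨rfl, rfl⟩
  have hIJ : (i : ℕ) < (j : ℕ) := hij
  have hJK : (j : ℕ) < (k : ℕ) := hjk
  rw [ccGrid_adj] at hadj
  obtain ⟨hne, hrel⟩ := hadj
  have hdivIJ : (i : ℕ) / (4 * p) ≤ (j : ℕ) / (4 * p) := Nat.div_le_div_right (le_of_lt hIJ)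
  have hdivJK : (j : ℕ) / (4 * p) ≤ (k : ℕ) / (4 * p) := Nat.div_le_div_right (le_of_lt hJK)
  have hneji : σ j ≠ σ i := fun h => absurd (σ.injective h) (by omega)
  have hnejk : σ j ≠ σ k := fun h => absurd (σ.injective h) (by omega)
  rcases hrel with hcol | ⟨hrow, hcc⟩
  · -- same column
    have hc : (i : ℕ) / (4 * p) = (k : ℕ) / (4 * p) := by
      have := congrArg (Fin.val) hcol
      simpa [(hval i).2, (hval k).2] using this
    left
    rw [ccGrid_adj]
    refine ⟨hneji, Or.inl ?_⟩
    apply Fin.ext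
    rw [(hval j).2, (hval i).2]
    omega
  · -- same row, adjacent cols
    have hc2 : ((σ i).2 : ℕ) + 1 = ((σ k).2 : ℕ) ∨ ((σ k).2 : ℕ) + 1 = ((σ i).2 : ℕ) := hcc
    rw [(hval i).2, (hval k).2] at hc2
    have hc3 : (i : ℕ) / (4 * p) + 1 = (k : ℕ) / (4 * p) := by omega
    by_cases hj : (j : ℕ) / (4 * p) = (i : ℕ) / (4 * p)
    · left
      rw [ccGrid_adj]
      refine ⟨hneji, Or.inl ?_⟩
      apply Fin.ext
      rw [(hval j).2, (hval i).2]; exact hj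
    · right
      rw [ccGrid_adj]
      refine ⟨hnejk, Or.inl ?_⟩
      apply Fin.ext
      rw [(hval j).2, (hval k).2]; omega

section Walks
variable {β : Type}

lemma del_not_reach {T : SimpleGraph β} (hac : T.IsAcyclic) {x y : β} (hxy : T.Adj x y) :
    ¬ (T.deleteEdges {s(x, y)}).Reachable x y := by
  have hb := (isAcyclic_iff_forall_adj_isBridge.mp hac) hxy
  rw [isBridge_iff] at hb
  exact hb

private lemma reach_or_aux {T : SimpleGraph β} {x y : β} :
    ∀ {u c : β}, T.Walk u c → c = x →
      (T.deleteEdges {s(x, y)}).Reachable u x ∨ (T.deleteEdges {s(x, y)}).Reachable u y := by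
  intro u c w
  induction w with
  | nil => rintro rfl; exact Or.inl (Reachable.refl _)
  | @cons u a c h w ih =>
    intro hc
    by_cases he : s(u, a) = s(x, y)
    · rw [Sym2.eq_iff] at he
      rcases he with ⟨rfl, rfl⟩ | ⟨rfl, rfl⟩
      · exact Or.inl (Reachable.refl _)
      · exact Or.inr (Reachable.refl _)
    · have hadj : (T.deleteEdges {s(x, y)}).Adj u a := by
        rw [deleteEdges_adj]; exact ⟨h, by simpa using he⟩
      rcases ih hc with h1 | h1
      · exact Or.inl (hadj.reachable.trans h1)
      · exact Or.inr (hadj.reachable.trans h1)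

/-- at least one side -/
lemma reach_or {T : SimpleGraph β} {x y u : β} (w : T.Walk u x) :
    (T.deleteEdges {s(x, y)}).Reachable u x ∨ (T.deleteEdges {s(x, y)}).Reachable u y :=
  reach_or_aux w rfl

private lemma exists_last_aux {H : SimpleGraph β} {y : β} :
    ∀ {u c : β}, H.Walk u c → c = y → u ≠ y →
      ∃ z, H.Adj z y ∧ (H.deleteEdges {s(z, y)}).Reachable u z := by
  intro u c w
  induction w with
  | nil => rintro rfl h; exact absurd rfl h
  | @cons u a c h w ih =>
    intro hd hu
    by_cases ha : a = y
    · subst ha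
      exact ⟨u, h, Reachable.refl _⟩
    · obtain ⟨z, hz, hr⟩ := ih hd ha
      refine ⟨z, hz, ?_⟩
      have hadj : (H.deleteEdges {s(z, y)}).Adj u a := by
        rw [deleteEdges_adj]
        refine ⟨h, ?_⟩
        simp only [Set.mem_singleton_iff, Sym2.eq_iff]
        rintro (⟨rfl, rfl⟩ | ⟨rfl, rfl⟩)
        · exact ha rfl
        · exact hu rfl
      exact hadj.reachable.trans hr

/-- last edge into `y` -/
lemma exists_last {H : SimpleGraph β} {y u : β} (w : H.Walk u y) (hu : u ≠ y) :
    ∃ z, H.Adj z y ∧ (H.deleteEdges {s(z, y)}).Reachable u z :=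
  exists_last_aux w rfl hu

private lemma reach_across_aux {T : SimpleGraph β} (hac : T.IsAcyclic) {x y z : β}
    (hxy : T.Adj x y) (hyz : T.Adj y z) (hne : s(x, y) ≠ s(y, z)) :
    ∀ {b c : β}, (T.deleteEdges {s(y, z)}).Walk b c → c = z →
      (T.deleteEdges {s(x, y)}).Reachable b y := by
  intro b c w
  induction w with
  | nil =>
    intro hd
    rw [hd]
    have hadj : (T.deleteEdges {s(x, y)}).Adj z y := by
      rw [deleteEdges_adj]
      refine ⟨hyz.symm, ?_⟩
      simp only [Set.mem_singleton_iff, Sym2.eq_iff]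
      rintro (⟨rfl, -⟩ | ⟨rfl, rfl⟩)
      · exact hne Sym2.eq_swap
      · exact hyz.ne rfl
    exact hadj.reachable
  | @cons b a c h w ih =>
    intro hd
    by_cases he : s(b, a) = s(x, y)
    · rw [Sym2.eq_iff] at he
      rcases he with ⟨rfl, rfl⟩ | ⟨rfl, rfl⟩
      · rw [hd] at w
        exact absurd ⟨w⟩ (del_not_reach hac hyz)
      · exact Reachable.refl _
    · have hadj : (T.deleteEdges {s(x, y)}).Adj b a := by
        rw [deleteEdges_adj]
        refine ⟨(deleteEdges_adj.mp h).1, by simpa using he⟩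
      exact hadj.reachable.trans (ih hd)

/-- crossing the shared vertex -/
lemma reach_across {T : SimpleGraph β} (hac : T.IsAcyclic) {x y z b : β}
    (hxy : T.Adj x y) (hyz : T.Adj y z) (hne : s(x, y) ≠ s(y, z))
    (h : (T.deleteEdges {s(y, z)}).Reachable b z) :
    (T.deleteEdges {s(x, y)}).Reachable b y := by
  obtain ⟨w⟩ := h
  exact reach_across_aux hac hxy hyz hne w rfl

lemma exists_adj_of_ne {T : SimpleGraph β} {u w : β} (h : T.Reachable u w) (hne : u ≠ w) :
    ∃ a b : β, T.Adj a b := by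
  obtain ⟨p⟩ := h
  cases p with
  | nil => exact absurd rfl hne
  | cons h _ => exact ⟨_, _, h⟩

end Walks

section Cuts
variable {V : Type} [Fintype V]

lemma cut_swap (D : BranchDecomp V) (x y : D.β) :
    D.cut y x = {v | (D.T.deleteEdges {s(x, y)}).Reachable (D.L v) y} := by
  unfold BranchDecomp.cut
  rw [Sym2.eq_swap]

lemma cut_compl (D : BranchDecomp V) {x y : D.β} (hxy : D.T.Adj x y) :
    D.cut y x = (D.cut x y)ᶜ := by
  ext v
  rw [cut_swap]
  simp only [Set.mem_setOf_eq, Set.mem_compl_iff, BranchDecomp.cut]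
  constructor
  · intro hy hx
    exact del_not_reach D.acyclic hxy (hx.symm.trans hy)
  · intro hx
    obtain ⟨w⟩ := (D.connected (D.L v) x : D.T.Reachable (D.L v) x)
    rcases reach_or (y := y) w with h | h
    · exact absurd h hx
    · exact h

lemma cut_card_sum (D : BranchDecomp V) {x y : D.β} (hxy : D.T.Adj x y) :
    (D.cut x y).ncard + (D.cut y x).ncard = Fintype.card V := by
  rw [cut_compl D hxy, Set.ncard_add_ncard_compl, Nat.card_eq_fintype_card]

lemma descend (D : BranchDecomp V) (t : ℕ) (ht : 1 ≤ t) (hn : 3 * t ≤ Fintype.card V) :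
    ∀ N : ℕ, ∀ x y : D.β, D.T.Adj x y → (D.cut x y).ncard < t →
      {b : D.β | (D.T.deleteEdges {s(x, y)}).Reachable b y}.ncard ≤ N →
      ∃ a b : D.β, D.T.Adj a b ∧ t ≤ (D.cut a b).ncard ∧ t ≤ (D.cut b a).ncard := by
  letI : Fintype D.β := D.finβ
  intro N
  induction N with
  | zero =>
    intro x y hxy _ hm
    exfalso
    have : y ∈ {b : D.β | (D.T.deleteEdges {s(x, y)}).Reachable b y} := Reachable.refl _
    have hpos : 0 < {b : D.β | (D.T.deleteEdges {s(x, y)}).Reachable b y}.ncard :=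
      ((Set.ncard_pos (Set.toFinite _)).mpr ⟨y, this⟩)
    omega
  | succ N ih =>
    intro x y hxy hsmall hm
    have hx_mem : x ∈ D.T.neighborSet y := hxy.symm
    rcases D.subcubic y with h1 | h3
    · -- degree 1 : contradiction
      exfalso
      obtain ⟨a, ha⟩ := Set.ncard_eq_one.mp h1
      have hax : a = x := by
        have := hx_mem
        rw [ha] at this
        exact this.symm
      rw [hax] at ha
      have hsub : D.cut y x ⊆ {v | D.L v = y} := by
        intro v hv
        rw [cut_swap] at hv
        simp only [Set.mem_setOf_eq] at hv ⊢
        by_contra hne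
        obtain ⟨w⟩ := hv
        obtain ⟨z, hz, _⟩ := exists_last w hne
        have hzadj := deleteEdges_adj.mp hz
        have hz_mem : z ∈ D.T.neighborSet y := hzadj.1.symm
        rw [ha] at hz_mem
        have hz_eq : z = x := hz_mem
        subst hz_eq
        exact hzadj.2 rfl
      have hone : (D.cut y x).ncard ≤ 1 := by
        apply Set.ncard_le_one_iff (Set.toFinite _) |>.mpr
        intro v1 v2 h1' h2'
        exact D.inj ((hsub h1').trans (hsub h2').symm)
      have := cut_card_sum D hxy
      omega
    · -- degree 3
      have hnotleaf : ∀ v, D.L v ≠ y := by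
        intro v hv
        have := (D.leaves y).mpr ⟨v, hv⟩
        omega
      obtain ⟨a, b, c, hab, hac, hbc, habc⟩ := Set.ncard_eq_three.mp h3
      -- extract z1 z2 with neighborSet y = {x, z1, z2}
      obtain ⟨z1, z2, h12, h1x, h2x, hset⟩ :
          ∃ z1 z2 : D.β, z1 ≠ z2 ∧ z1 ≠ x ∧ z2 ≠ x ∧
            D.T.neighborSet y = {x, z1, z2} := by
        rw [habc] at hx_mem
        rcases hx_mem with rfl | rfl | rfl
        · exact ⟨b, c, hbc, fun h => hab h.symm, fun h => hac h.symm, habc⟩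
        · refine ⟨a, c, hac, fun h => hab h, fun h => hbc h.symm, ?_⟩
          rw [habc]; ext u; simp; tauto
        · refine ⟨a, b, hab, fun h => hac h, fun h => hbc h, ?_⟩
          rw [habc]; ext u; simp; tauto
      have hz1 : D.T.Adj y z1 := by
        have : z1 ∈ D.T.neighborSet y := by rw [hset]; simp
        exact this
      have hz2 : D.T.Adj y z2 := by
        have : z2 ∈ D.T.neighborSet y := by rw [hset]; simp
        exact this
      -- decomposition of cut y x
      have hdecomp : D.cut y x ⊆ D.cut z1 y ∪ D.cut z2 y := by
        intro v hv
        rw [cut_swap] at hv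
        simp only [Set.mem_setOf_eq] at hv
        obtain ⟨w⟩ := hv
        obtain ⟨z, hz, hr⟩ := exists_last w (hnotleaf v)
        have hzadj := deleteEdges_adj.mp hz
        have hznx : z ≠ x := by
          intro h; subst h; exact hzadj.2 rfl
        have hz_mem : z ∈ D.T.neighborSet y := hzadj.1.symm
        rw [hset] at hz_mem
        have hr' : (D.T.deleteEdges {s(z, y)}).Reachable (D.L v) z := by
          apply hr.mono
          intro u1 u2 h12'
          rw [deleteEdges_adj] at h12' ⊢
          exact ⟨(deleteEdges_adj.mp h12'.1).1, h12'.2⟩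
        rcases hz_mem with rfl | rfl | rfl
        · exact absurd rfl hznx
        · left; exact hr'
        · right; exact hr'
      have hsum : (D.cut y x).ncard ≤ (D.cut z1 y).ncard + (D.cut z2 y).ncard :=
        le_trans (Set.ncard_le_ncard hdecomp (Set.toFinite _)) (Set.ncard_union_le _ _)
      have htot := cut_card_sum D hxy
      -- some zi has big side
      have hbig : t ≤ (D.cut z1 y).ncard ∨ t ≤ (D.cut z2 y).ncard := by omega
      -- wlog-free handling
      have hmain : ∀ z : D.β, D.T.Adj y z → z ≠ x → t ≤ (D.cut z y).ncard →
          ∃ a b : D.β, D.T.Adj a b ∧ t ≤ (D.cut a b).ncard ∧ t ≤ (D.cut b a).ncard := by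
        intro z hyz hzx hzbig
        by_cases hyzc : t ≤ (D.cut y z).ncard
        · exact ⟨z, y, hyz.symm, hzbig, hyzc⟩
        · push_neg at hyzc
          apply ih y z hyz hyzc
          have hne_e : s(x, y) ≠ s(y, z) := by
            intro hcontra
            rw [Sym2.eq_iff] at hcontra
            rcases hcontra with ⟨rfl, rfl⟩ | ⟨rfl, -⟩
            · exact hyz.ne rfl
            · exact hzx rfl
          have hsub2 : {b : D.β | (D.T.deleteEdges {s(y, z)}).Reachable b z} ⊆
              {b : D.β | (D.T.deleteEdges {s(x, y)}).Reachable b y} := by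
            intro b hb
            exact reach_across D.acyclic hxy hyz hne_e hb
          have hss : {b : D.β | (D.T.deleteEdges {s(y, z)}).Reachable b z} ⊂
              {b : D.β | (D.T.deleteEdges {s(x, y)}).Reachable b y} := by
            refine ⟨hsub2, fun hsup => ?_⟩
            have hy_in : y ∈ {b : D.β | (D.T.deleteEdges {s(x, y)}).Reachable b y} :=
              Reachable.refl _
            have := hsup hy_in
            exact del_not_reach D.acyclic hyz this
          have := Set.ncard_lt_ncard hss (Set.toFinite _)
          omega
      rcases hbig with hb1 | hb1
      · exact hmain z1 hz1 h1x hb1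
      · exact hmain z2 hz2 h2x hb1

lemma sepExists (D : BranchDecomp V) (t : ℕ) (ht : 1 ≤ t) (hn : 3 * t ≤ Fintype.card V) :
    ∃ x y : D.β, D.T.Adj x y ∧ t ≤ (D.cut x y).ncard ∧ t ≤ (D.cut y x).ncard := by
  letI : Fintype D.β := D.finβ
  have hV : 1 < Fintype.card V := by omega
  obtain ⟨v1, v2, hv⟩ := Fintype.exists_pair_of_one_lt_card hV
  have hL : D.L v1 ≠ D.L v2 := fun h => hv (D.inj h)
  obtain ⟨x0, y0, hxy0⟩ := exists_adj_of_ne (D.connected (D.L v1) (D.L v2)) hL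
  by_cases h : ∀ x y : D.β, D.T.Adj x y → t ≤ (D.cut x y).ncard
  · exact ⟨x0, y0, hxy0, h x0 y0 hxy0, h y0 x0 hxy0.symm⟩
  · push_neg at h
    obtain ⟨x, y, hxy, hsmall⟩ := h
    exact descend D t ht hn (Fintype.card D.β) x y hxy hsmall
      (le_trans (Set.ncard_le_ncard (Set.subset_univ _) (Set.toFinite _))
        (by rw [Set.ncard_univ, Nat.card_eq_fintype_card]))

end Cuts

/-- discrete IVT on ℕ -/
lemma nat_ivt (P : ℕ → Prop) : ∀ d u, P u → ¬ P (u + d) →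
    ∃ j, u ≤ j ∧ j + 1 ≤ u + d ∧ P j ∧ ¬ P (j + 1) := by
  intro d
  induction d with
  | zero => intro u hu hnu; exact absurd hu hnu
  | succ d ih =>
    intro u hu hnu
    by_cases h1 : P (u + 1)
    · obtain ⟨j, hj1, hj2, hj3, hj4⟩ := ih (u + 1) h1 (by rwa [show u + 1 + d = u + (d+1) by omega])
      exact ⟨j, by omega, by omega, hj3, hj4⟩
    · exact ⟨u, le_refl _, by omega, hu, h1⟩


section Comb2
variable {P Q : ℕ} (A : Set (Fin P × Fin Q))

/-- a crossing in a mixed row -/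
lemma row_crossing {i : Fin P} (hu : ∃ c, (i, c) ∈ A) (hw : ∃ c, (i, c) ∉ A) :
    ∃ s t : Fin Q, ((s : ℕ) + 1 = t ∨ (t : ℕ) + 1 = s) ∧ (i, s) ∈ A ∧ (i, t) ∉ A := by
  obtain ⟨u, hu⟩ := hu
  obtain ⟨w, hw⟩ := hw
  rcases lt_trichotomy (u : ℕ) (w : ℕ) with h | h | h
  · -- u < w, P c := (i, c) ∈ A
    obtain ⟨j, hj1, hj2, hj3, hj4⟩ := nat_ivt
      (fun c => ∃ h : c < Q, (i, ⟨c, h⟩) ∈ A) ((w : ℕ) - u) u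
      ⟨u.isLt, by simpa using hu⟩
      (by
        rw [show (u : ℕ) + ((w : ℕ) - u) = w by omega]
        rintro ⟨h', hmem⟩
        exact hw (by simpa using hmem))
    obtain ⟨hjQ, hjmem⟩ := hj3
    have hj1Q : j + 1 < Q := lt_of_le_of_lt (by omega) w.isLt
    refine ⟨⟨j, hjQ⟩, ⟨j + 1, hj1Q⟩, Or.inl rfl, hjmem, fun hmem => hj4 ⟨hj1Q, hmem⟩⟩
  · exact absurd hu (by rwa [show u = w from Fin.ext h])
  · -- w < u
    obtain ⟨j, hj1, hj2, hj3, hj4⟩ := nat_ivt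
      (fun c => ∃ h : c < Q, (i, ⟨c, h⟩) ∉ A) ((u : ℕ) - w) w
      ⟨w.isLt, by simpa using hw⟩
      (by
        rw [show (w : ℕ) + ((u : ℕ) - w) = u by omega]
        rintro ⟨h', hmem⟩
        exact hmem (by simpa using hu))
    obtain ⟨hjQ, hjmem⟩ := hj3
    have hj1Q : j + 1 < Q := lt_of_le_of_lt (by omega) u.isLt
    have hmem2 : (i, (⟨j + 1, hj1Q⟩ : Fin Q)) ∈ A := by
      by_contra hcon
      exact hj4 ⟨hj1Q, hcon⟩
    exact ⟨⟨j + 1, hj1Q⟩, ⟨j, hjQ⟩, Or.inr rfl, hmem2, hjmem⟩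

lemma mim_zero {V : Type} (G : SimpleGraph V) (A : Set V) : IsMimMatching G A 0 :=
  ⟨Fin.elim0, Fin.elim0, fun i => i.elim0, fun i => i.elim0, fun i => i.elim0,
    fun i => i.elim0, fun i => i.elim0⟩

/-- matching from 2p mixed rows -/
lemma matching_of_rows (p : ℕ) (R : Finset (Fin P)) (hR : 2 * p ≤ R.card)
    (hmix : ∀ i ∈ R, (∃ c, (i, c) ∈ A) ∧ (∃ c, (i, c) ∉ A)) :
    IsMimMatching (ccGrid P Q) A p := by
  rcases Nat.eq_zero_or_pos p with rfl | hp
  · exact mim_zero _ _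
  -- Q is positive
  have hRne : R.Nonempty := Finset.card_pos.mp (by omega)
  obtain ⟨i0, hi0⟩ := hRne
  obtain ⟨⟨c0, _⟩, _⟩ := hmix i0 hi0
  -- choose crossings
  have hcr : ∀ i : Fin P, ∃ s t : Fin Q,
      i ∈ R → (((s : ℕ) + 1 = t ∨ (t : ℕ) + 1 = s) ∧ (i, s) ∈ A ∧ (i, t) ∉ A) := by
    intro i
    by_cases hi : i ∈ R
    · obtain ⟨s, t, h⟩ := row_crossing A (hmix i hi).1 (hmix i hi).2
      exact ⟨s, t, fun _ => h⟩
    · exact ⟨c0, c0, fun h => absurd h hi⟩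
  choose S T hST using hcr
  -- parity pigeonhole
  set R0 := R.filter (fun i => (S i : ℕ) % 2 = 0) with hR0
  set R1 := R.filter (fun i => ¬ (S i : ℕ) % 2 = 0) with hR1
  have hsplit : R0.card + R1.card = R.card := Finset.card_filter_add_card_filter_not _
  have hpig : p ≤ R0.card ∨ p ≤ R1.card := by omega
  -- unified: get R' with card ≥ p and constant parity ε
  obtain ⟨ε, R', hsub, hcard, hpar⟩ :
      ∃ (ε : ℕ) (R' : Finset (Fin P)), R' ⊆ R ∧ p ≤ R'.card ∧
        ∀ i ∈ R', (S i : ℕ) % 2 = ε := by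
    rcases hpig with h | h
    · exact ⟨0, R0, Finset.filter_subset _ _, h, fun i hi => (Finset.mem_filter.mp hi).2⟩
    · refine ⟨1, R1, Finset.filter_subset _ _, h, fun i hi => ?_⟩
      have := (Finset.mem_filter.mp hi).2
      omega
  obtain ⟨R'', hsub2, hcard2⟩ := Finset.exists_subset_card_eq hcard
  set g := R''.orderEmbOfFin hcard2 with hg
  have hgmem : ∀ i : Fin p, g i ∈ R := fun i =>
    hsub (hsub2 (R''.orderEmbOfFin_mem hcard2 i))
  have hgpar : ∀ i : Fin p, (S (g i) : ℕ) % 2 = ε := fun i =>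
    hpar _ (hsub2 (R''.orderEmbOfFin_mem hcard2 i))
  refine ⟨fun i => (g i, S (g i)), fun i => (g i, T (g i)), ?_, ?_, ?_, ?_, ?_⟩
  · intro i j hij
    exact g.injective (congrArg Prod.fst hij)
  · intro i j hij
    exact g.injective (congrArg Prod.fst hij)
  · intro i
    exact (hST (g i) (hgmem i)).2.1
  · intro i
    exact (hST (g i) (hgmem i)).2.2
  · intro i j
    constructor
    · intro hadj
      rw [ccGrid_adj] at hadj
      obtain ⟨hne, hrel⟩ := hadj
      by_contra hij
      have hgij : g i ≠ g j := fun h => hij (g.injective h)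
      have hrows : (g i : Fin P) ≠ (g j : Fin P) := hgij
      rcases hrel with hcol | ⟨hrow, _⟩
      · -- same column : S (g i) = T (g j), parity contradiction
        have hSi := hgpar i
        have hSj := hgpar j
        have hadj2 := (hST (g j) (hgmem j)).1
        have hval : (S (g i) : ℕ) = (T (g j) : ℕ) := congrArg Fin.val hcol
        omega
      · exact hrows hrow
    · rintro rfl
      rw [ccGrid_adj]
      have hcross := (hST (g i) (hgmem i)).1
      have hmemA := (hST (g i) (hgmem i)).2.1
      have hmemB := (hST (g i) (hgmem i)).2.2
      refine ⟨?_, Or.inr ⟨rfl, hcross⟩⟩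
      intro h
      have h' : ((g i, S (g i)) : Fin P × Fin Q) = (g i, T (g i)) := h
      rw [h'] at hmemA
      exact hmemB hmemA

lemma matching_of_cols (p : ℕ) (M : Finset (Fin Q)) (hM : 2 * p - 1 ≤ M.card) (hp : 0 < p)
    (hmix : ∀ c ∈ M, (∃ r, (r, c) ∈ A) ∧ (∃ r, (r, c) ∉ A)) :
    IsMimMatching (ccGrid P Q) A p := by
  have h2p : 2 * p - 1 ≤ M.card := hM
  obtain ⟨M'', hsub, hcard⟩ := Finset.exists_subset_card_eq h2p
  set e := M''.orderEmbOfFin hcard with he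
  have hemem : ∀ i : Fin (2 * p - 1), e i ∈ M := fun i =>
    hsub (M''.orderEmbOfFin_mem hcard i)
  -- the p chosen columns
  have h2ip : ∀ i : Fin p, 2 * (i : ℕ) < 2 * p - 1 := fun i => by have := i.isLt; omega
  set c : Fin p → Fin Q := fun i => e ⟨2 * (i : ℕ), h2ip i⟩ with hc
  have hgap : ∀ i j : Fin p, (i : ℕ) < (j : ℕ) → ((c i : ℕ)) + 2 ≤ (c j : ℕ) := by
    intro i j hij
    have h1 : (2 * (i : ℕ) + 1) < 2 * p - 1 := by have := j.isLt; omega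
    have l1 : (e ⟨2 * (i : ℕ), h2ip i⟩ : ℕ) < (e ⟨2 * (i : ℕ) + 1, h1⟩ : ℕ) :=
      e.strictMono (by simp [Fin.lt_def])
    have l2 : (e ⟨2 * (i : ℕ) + 1, h1⟩ : ℕ) < (e ⟨2 * (j : ℕ), h2ip j⟩ : ℕ) :=
      e.strictMono (by simp [Fin.lt_def]; omega)
    simp only [hc]
    omega
  have hcne : ∀ i j : Fin p, i ≠ j → ((c i : ℕ)) + 2 ≤ (c j : ℕ) ∨ ((c j : ℕ)) + 2 ≤ (c i : ℕ) := by
    intro i j hij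
    rcases lt_or_gt_of_ne (fun h : (i : ℕ) = (j : ℕ) => hij (Fin.ext h)) with h | h
    · exact Or.inl (hgap i j h)
    · exact Or.inr (hgap j i h)
  -- choose vertices
  have hch : ∀ i : Fin p, ∃ ra rb : Fin P, (ra, c i) ∈ A ∧ (rb, c i) ∉ A := by
    intro i
    obtain ⟨⟨ra, hra⟩, ⟨rb, hrb⟩⟩ := hmix (c i) (hemem _)
    exact ⟨ra, rb, hra, hrb⟩
  choose ra rb hra hrb using hch
  refine ⟨fun i => (ra i, c i), fun i => (rb i, c i), ?_, ?_, hra, hrb, ?_⟩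
  · intro i j hij
    by_contra hne
    rcases hcne i j hne with h | h <;>
      · have := congrArg (fun x : Fin P × Fin Q => (x.2 : ℕ)) hij
        simp at this; omega
  · intro i j hij
    by_contra hne
    rcases hcne i j hne with h | h <;>
      · have := congrArg (fun x : Fin P × Fin Q => (x.2 : ℕ)) hij
        simp at this; omega
  · intro i j
    constructor
    · intro hadj
      rw [ccGrid_adj] at hadj
      obtain ⟨hne, hrel⟩ := hadj
      by_contra hij
      rcases hcne i j hij with h | h <;>
      · rcases hrel with hcol | ⟨_, hcc⟩
        · have : ((c i : ℕ)) = ((c j : ℕ)) := congrArg Fin.val hcol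
          omega
        · simp only at hcc; omega
    · rintro rfl
      rw [ccGrid_adj]
      refine ⟨?_, Or.inl rfl⟩
      intro hcontra
      have h' : ((ra i, c i) : Fin P × Fin Q) = (rb i, c i) := hcontra
      have := hra i
      rw [h'] at this
      exact hrb i this
end Comb2

/-- main combinatorial lemma -/
lemma comb_main (p : ℕ) (hp : 4 ≤ p) (A : Set (Fin (4 * p) × Fin (3 * p)))
    (hA : 4 * p * p ≤ A.ncard) (hA' : 4 * p * p ≤ Aᶜ.ncard) :
    IsMimMatching (ccGrid (4 * p) (3 * p)) A p := by
  set M : Finset (Fin (3 * p)) := Finset.univ.filter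
    (fun c => (∃ r, (r, c) ∈ A) ∧ (∃ r, (r, c) ∉ A)) with hMdef
  have hMmix : ∀ c ∈ M, (∃ r, (r, c) ∈ A) ∧ (∃ r, (r, c) ∉ A) := by
    intro c hc; exact (Finset.mem_filter.mp hc).2
  by_cases hM : 2 * p - 1 ≤ M.card
  · exact matching_of_cols A p M hM (by omega) hMmix
  push_neg at hM
  -- few mixed columns
  have hMcard : M.card ≤ 2 * p - 2 := by omega
  -- a pure-B column exists or a pure-A column exists, etc.
  by_cases hPA : ∃ cA : Fin (3 * p), ∀ r, (r, cA) ∈ A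
  · obtain ⟨cA, hcA⟩ := hPA
    -- rows meeting Aᶜ
    set R : Finset (Fin (4 * p)) := Finset.univ.filter (fun i => ∃ c, (i, c) ∉ A) with hRdef
    have hmixR : ∀ i ∈ R, (∃ c, (i, c) ∈ A) ∧ (∃ c, (i, c) ∉ A) := by
      intro i hi
      exact ⟨⟨cA, hcA i⟩, (Finset.mem_filter.mp hi).2⟩
    apply matching_of_rows A p R ?_ hmixR
    -- counting
    by_cases hPB : ∃ cB : Fin (3 * p), ∀ r, (r, cB) ∉ A
    · -- both pure columns: every row is mixed, R = univ
      obtain ⟨cB, hcB⟩ := hPB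
      have hRuniv : R = Finset.univ := by
        apply Finset.eq_univ_iff_forall.mpr
        intro i
        rw [hRdef, Finset.mem_filter]
        exact ⟨Finset.mem_univ _, ⟨cB, hcB i⟩⟩
      rw [hRuniv, Finset.card_univ, Fintype.card_fin]
      omega
    · -- no pure-B column: count via Aᶜ
      push_neg at hPB
      set C : Finset (Fin (3 * p)) := Finset.univ.filter (fun c => ∃ r, (r, c) ∉ A) with hCdef
      have hCM : C ⊆ M := by
        intro c hc
        rw [hMdef, Finset.mem_filter]
        obtain ⟨r', hr'⟩ := hPB c
        exact ⟨Finset.mem_univ _, ⟨r', hr'⟩, (Finset.mem_filter.mp hc).2⟩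
      have hsub : Aᶜ.toFinset ⊆ R ×ˢ C := by
        intro x hx
        rw [Set.mem_toFinset] at hx
        rw [Finset.mem_product]
        constructor
        · rw [hRdef, Finset.mem_filter]
          exact ⟨Finset.mem_univ _, ⟨x.2, by rwa [Prod.mk.eta]⟩⟩
        · rw [hCdef, Finset.mem_filter]
          exact ⟨Finset.mem_univ _, ⟨x.1, by rwa [Prod.mk.eta]⟩⟩
      have hcount : 4 * p * p ≤ R.card * (2 * p - 2) := by
        calc 4 * p * p ≤ Aᶜ.ncard := hA'
          _ = Aᶜ.toFinset.card := Set.ncard_eq_toFinset_card' _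
          _ ≤ (R ×ˢ C).card := Finset.card_le_card hsub
          _ = R.card * C.card := Finset.card_product _ _
          _ ≤ R.card * (2 * p - 2) :=
            Nat.mul_le_mul_left _ (le_trans (Finset.card_le_card hCM) hMcard)
      by_contra hRc
      push_neg at hRc
      have h1 : R.card ≤ 2 * p - 1 := by omega
      obtain ⟨e, he⟩ : ∃ e, 2 * p = e + 2 := ⟨2 * p - 2, by omega⟩
      have h2 : 4 * p * p ≤ (e + 1) * e := by
        have hmul := le_trans hcount (Nat.mul_le_mul_right _ h1)
        have h3 : 2 * p - 1 = e + 1 := by omega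
        have h4 : 2 * p - 2 = e := by omega
        rwa [h3, h4] at hmul
      have h5 : 4 * p * p = (e + 2) * (e + 2) := by rw [← he]; ring
      nlinarith [h2, h5]
  · -- no pure-A column: symmetric, count via A
    push_neg at hPA
    -- get pure-B column from a non-mixed column
    have hMne : ∃ c : Fin (3 * p), c ∉ M := by
      by_contra hcon
      push_neg at hcon
      have : (Finset.univ : Finset (Fin (3 * p))) ⊆ M := fun c _ => hcon c
      have := Finset.card_le_card this
      rw [Finset.card_univ, Fintype.card_fin] at this
      omega
    obtain ⟨cB, hcB⟩ := hMne
    have hcBpure : ∀ r, (r, cB) ∉ A := by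
      have h1 : ¬ ((∃ r, (r, cB) ∈ A) ∧ (∃ r, (r, cB) ∉ A)) := fun h =>
        hcB (by rw [hMdef, Finset.mem_filter]; exact ⟨Finset.mem_univ _, h⟩)
      intro r hmem
      exact h1 ⟨⟨r, hmem⟩, hPA cB⟩
    set R : Finset (Fin (4 * p)) := Finset.univ.filter (fun i => ∃ c, (i, c) ∈ A) with hRdef
    have hmixR : ∀ i ∈ R, (∃ c, (i, c) ∈ A) ∧ (∃ c, (i, c) ∉ A) := by
      intro i hi
      exact ⟨(Finset.mem_filter.mp hi).2, ⟨cB, hcBpure i⟩⟩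
    apply matching_of_rows A p R ?_ hmixR
    set C : Finset (Fin (3 * p)) := Finset.univ.filter (fun c => ∃ r, (r, c) ∈ A) with hCdef
    have hCM : C ⊆ M := by
      intro c hc
      rw [hMdef, Finset.mem_filter]
      exact ⟨Finset.mem_univ _, (Finset.mem_filter.mp hc).2, hPA c⟩
    have hsub : A.toFinset ⊆ R ×ˢ C := by
      intro x hx
      rw [Set.mem_toFinset] at hx
      rw [Finset.mem_product]
      constructor
      · rw [hRdef, Finset.mem_filter]
        exact ⟨Finset.mem_univ _, ⟨x.2, by rwa [Prod.mk.eta]⟩⟩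
      · rw [hCdef, Finset.mem_filter]
        exact ⟨Finset.mem_univ _, ⟨x.1, by rwa [Prod.mk.eta]⟩⟩
    have hcount : 4 * p * p ≤ R.card * (2 * p - 2) := by
      calc 4 * p * p ≤ A.ncard := hA
        _ = A.toFinset.card := Set.ncard_eq_toFinset_card' _
        _ ≤ (R ×ˢ C).card := Finset.card_le_card hsub
        _ = R.card * C.card := Finset.card_product _ _
        _ ≤ R.card * (2 * p - 2) :=
          Nat.mul_le_mul_left _ (le_trans (Finset.card_le_card hCM) hMcard)
    by_contra hRc
    push_neg at hRc
    have h1 : R.card ≤ 2 * p - 1 := by omega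
    obtain ⟨e, he⟩ : ∃ e, 2 * p = e + 2 := ⟨2 * p - 2, by omega⟩
    have h2 : 4 * p * p ≤ (e + 1) * e := by
      have hmul := le_trans hcount (Nat.mul_le_mul_right _ h1)
      have h3 : 2 * p - 1 = e + 1 := by omega
      have h4 : 2 * p - 2 = e := by omega
      rwa [h3, h4] at hmul
    have h5 : 4 * p * p = (e + 2) * (e + 2) := by rw [← he]; ring
    nlinarith [h2, h5]

/-- parent function for the caterpillar tree -/
def fN (m x : ℕ) : ℕ := if x < m then x - 1 else min (x - m - 1) (m - 1)

lemma fN_small {m x : ℕ} (h : x < m) : fN m x = x - 1 := if_pos h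
lemma fN_large {m x : ℕ} (h : ¬ x < m) : fN m x = min (x - m - 1) (m - 1) := if_neg h

lemma fN_le {m x : ℕ} : fN m x ≤ x := by
  rcases Nat.lt_or_ge x m with h | h
  · rw [fN_small h]; omega
  · rw [fN_large (by omega)]; omega

lemma fN_lt {m x : ℕ} (hm : 1 ≤ m) (hx : x ≠ 0) : fN m x < x := by
  rcases Nat.lt_or_ge x m with h | h
  · rw [fN_small h]; omega
  · rw [fN_large (by omega)]; omega

lemma fN_lt_m {m x : ℕ} (hm : 1 ≤ m) : fN m x < m := by
  rcases Nat.lt_or_ge x m with h | h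
  · rw [fN_small h]; omega
  · rw [fN_large (by omega)]; omega

/-- caterpillar tree on `2m+2` vertices: spine `0..m-1`, leaves `m..2m+1` -/
def catT (m : ℕ) : SimpleGraph (Fin (2 * m + 2)) :=
  SimpleGraph.fromRel (fun a b => (b : ℕ) = fN m a ∧ (a : ℕ) ≠ 0)

lemma catT_adj {m : ℕ} (hm : 1 ≤ m) {z w : Fin (2 * m + 2)} :
    (catT m).Adj z w ↔
      (((w : ℕ) = fN m z ∧ (z : ℕ) ≠ 0) ∨ ((z : ℕ) = fN m w ∧ (w : ℕ) ≠ 0)) := by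
  constructor
  · rintro ⟨hne, h⟩; exact h
  · intro h
    refine ⟨?_, h⟩
    intro he
    have hval : (z : ℕ) = (w : ℕ) := congrArg Fin.val he
    rcases h with ⟨h1, h2⟩ | ⟨h1, h2⟩
    · have := fN_lt hm h2; omega
    · have := fN_lt hm h2; omega

/-- reachability to the root -/
lemma catT_reach0 {m : ℕ} (hm : 1 ≤ m) : ∀ (k : ℕ) (x : Fin (2 * m + 2)), (x : ℕ) ≤ k →
    (catT m).Reachable x ⟨0, by omega⟩ := by
  intro k
  induction k with
  | zero =>
    intro x hx
    have : x = ⟨0, by omega⟩ := Fin.ext (show (x : ℕ) = 0 by omega)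
    rw [this]
  | succ k ih =>
    intro x hx
    by_cases h0 : (x : ℕ) = 0
    · have : x = ⟨0, by omega⟩ := Fin.ext (show (x : ℕ) = 0 by omega)
      rw [this]
    · have hlt : fN m (x : ℕ) < x := fN_lt hm h0
      have hadj : (catT m).Adj x ⟨fN m (x : ℕ), by have := fN_le (m := m) (x := (x : ℕ)); have := x.isLt; omega⟩ :=
        (catT_adj hm).mpr (Or.inl ⟨rfl, h0⟩)
      exact hadj.reachable.trans (ih _ (show fN m (x : ℕ) ≤ k by omega))

lemma catT_connected {m : ℕ} (hm : 1 ≤ m) : (catT m).Connected := by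
  rw [connected_iff]
  refine ⟨fun u v => ?_, ⟨⟨0, by omega⟩⟩⟩
  exact (catT_reach0 hm (u : ℕ) u le_rfl).trans (catT_reach0 hm (v : ℕ) v le_rfl).symm

/-- `Uanc a z`: `a` is an iterated-parent of `z` -/
def Uanc (m : ℕ) (a z : Fin (2 * m + 2)) : Prop := ∃ k, (fN m)^[k] (z : ℕ) = (a : ℕ)

lemma iter_fN_le {m k x : ℕ} : (fN m)^[k] x ≤ x := by
  induction k generalizing x with
  | zero => simp
  | succ k ih =>
    rw [Function.iterate_succ_apply]
    exact le_trans ih fN_le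

lemma Uanc_step {m : ℕ} {a z w : Fin (2 * m + 2)} (hw : (w : ℕ) = fN m (z : ℕ)) (hza : z ≠ a) :
    Uanc m a z ↔ Uanc m a w := by
  constructor
  · rintro ⟨k, hk⟩
    cases k with
    | zero => exact absurd (Fin.ext hk) hza
    | succ k =>
      rw [Function.iterate_succ_apply, ← hw] at hk
      exact ⟨k, hk⟩
  · rintro ⟨k, hk⟩
    refine ⟨k + 1, ?_⟩
    rw [Function.iterate_succ_apply, ← hw]
    exact hk

lemma catT_acyclic {m : ℕ} (hm : 1 ≤ m) : (catT m).IsAcyclic := by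
  rw [isAcyclic_iff_forall_adj_isBridge]
  intro v w hadj
  rw [isBridge_iff]
  have key : ∀ a pa : Fin (2 * m + 2), (pa : ℕ) = fN m (a : ℕ) → (a : ℕ) ≠ 0 →
      ¬ ((catT m) \ fromEdgeSet {s(a, pa)}).Reachable a pa := by
    intro a pa hpa ha0 hreach
    have hwalkU : ∀ (u v : Fin (2 * m + 2)),
        ((catT m) \ fromEdgeSet {s(a, pa)}).Walk u v → (Uanc m a u ↔ Uanc m a v) := by
      intro u v wk
      induction wk with
      | nil => exact Iff.rfl
      | @cons u x v h wk ih =>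
        refine Iff.trans ?_ ih
        have hadj' : (catT m).Adj u x := h.1
        have hne : s(u, x) ≠ s(a, pa) := by
          intro hcontra
          exact h.2 (by rw [fromEdgeSet_adj]; exact ⟨hcontra, hadj'.ne⟩)
        rcases (catT_adj hm).mp hadj' with ⟨h1, h2⟩ | ⟨h1, h2⟩
        · -- x is parent of u
          have hua : u ≠ a := by
            rintro rfl
            apply hne
            have hx : x = pa := Fin.ext (by rw [h1, hpa])
            rw [hx]
          exact Uanc_step h1 hua
        · -- u is parent of x
          have hxa : x ≠ a := by
            rintro rfl
            apply hne
            have hu : u = pa := Fin.ext (by rw [h1, hpa])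
            rw [hu, Sym2.eq_swap]
          exact (Uanc_step h1 hxa).symm
    obtain ⟨wk⟩ := hreach
    have hiff := hwalkU _ _ wk
    have hUa : Uanc m a a := ⟨0, rfl⟩
    have hUpa : ¬ Uanc m a pa := by
      rintro ⟨k, hk⟩
      have h1 : (fN m)^[k] (pa : ℕ) ≤ (pa : ℕ) := iter_fN_le
      have h2 : fN m (a : ℕ) < (a : ℕ) := fN_lt hm ha0
      omega
    exact hUpa (hiff.mp hUa)
  rcases (catT_adj hm).mp hadj with ⟨h1, h2⟩ | ⟨h1, h2⟩
  · exact key v w h1 h2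
  · intro hreach
    apply key w v h1 h2
    rw [Sym2.eq_swap]
    exact hreach.symm
/-- leaf neighborhoods -/
lemma nb_leaf {m : ℕ} (hm : 2 ≤ m) (z : Fin (2 * m + 2)) (hz : m ≤ (z : ℕ)) :
    (catT m).neighborSet z = {(⟨fN m (z : ℕ), by have := fN_lt_m (m := m) (x := (z : ℕ)) (by omega : 1 ≤ m); omega⟩ : Fin (2 * m + 2))} := by
  ext w
  rw [mem_neighborSet, catT_adj (by omega), Set.mem_singleton_iff, Fin.ext_iff]
  have hw := w.isLt
  have h1 : fN m (z : ℕ) < m := fN_lt_m (by omega)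
  constructor
  · rintro (⟨ha, hb⟩ | ⟨ha, hb⟩)
    · exact ha
    · -- z = fN w < m contradicts m ≤ z
      have := fN_lt_m (m := m) (x := (w : ℕ)) (by omega)
      omega
  · intro h
    exact Or.inl ⟨h, by omega⟩

/-- root neighborhood -/
lemma nb_root {m : ℕ} (hm : 2 ≤ m) (z : Fin (2 * m + 2)) (hz : (z : ℕ) = 0) :
    (catT m).neighborSet z =
      {(⟨1, by omega⟩ : Fin (2 * m + 2)), ⟨m, by omega⟩, ⟨m + 1, by omega⟩} := by
  ext w
  rw [mem_neighborSet, catT_adj (by omega)]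
  simp only [Set.mem_insert_iff, Set.mem_singleton_iff, Fin.ext_iff]
  have hw := w.isLt
  constructor
  · rintro (⟨ha, hb⟩ | ⟨ha, hb⟩)
    · omega
    · rcases Nat.lt_or_ge (w : ℕ) m with h | h
      · rw [fN_small h] at ha; omega
      · rw [fN_large (by omega)] at ha; omega
  · intro h
    right
    rcases h with h | h | h
    · refine ⟨?_, by omega⟩
      rw [fN_small (by omega)]; omega
    · refine ⟨?_, by omega⟩
      rw [fN_large (by omega)]; omega
    · refine ⟨?_, by omega⟩
      rw [fN_large (by omega)]; omega

/-- middle spine neighborhood -/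
lemma nb_mid {m : ℕ} (hm : 2 ≤ m) (z : Fin (2 * m + 2)) (hz1 : 1 ≤ (z : ℕ)) (hz2 : (z : ℕ) ≤ m - 2) :
    (catT m).neighborSet z =
      {(⟨(z : ℕ) - 1, by omega⟩ : Fin (2 * m + 2)), ⟨(z : ℕ) + 1, by omega⟩,
        ⟨m + (z : ℕ) + 1, by omega⟩} := by
  ext w
  rw [mem_neighborSet, catT_adj (by omega)]
  simp only [Set.mem_insert_iff, Set.mem_singleton_iff, Fin.ext_iff]
  have hw := w.isLt
  have hzm : (z : ℕ) < m := by omega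
  constructor
  · rintro (⟨ha, hb⟩ | ⟨ha, hb⟩)
    · rw [fN_small hzm] at ha; omega
    · rcases Nat.lt_or_ge (w : ℕ) m with h | h
      · rw [fN_small h] at ha; omega
      · rw [fN_large (by omega)] at ha; omega
  · intro h
    rcases h with h | h | h
    · left
      refine ⟨?_, by omega⟩
      rw [fN_small hzm]; omega
    · right
      refine ⟨?_, by omega⟩
      rw [fN_small (by omega)]; omega
    · right
      refine ⟨?_, by omega⟩
      rw [fN_large (by omega)]; omega

/-- end spine neighborhood -/
lemma nb_end {m : ℕ} (hm : 2 ≤ m) (z : Fin (2 * m + 2)) (hz : (z : ℕ) = m - 1) :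
    (catT m).neighborSet z =
      {(⟨m - 2, by omega⟩ : Fin (2 * m + 2)), ⟨2 * m, by omega⟩, ⟨2 * m + 1, by omega⟩} := by
  ext w
  rw [mem_neighborSet, catT_adj (by omega)]
  simp only [Set.mem_insert_iff, Set.mem_singleton_iff, Fin.ext_iff]
  have hw := w.isLt
  have hzm : (z : ℕ) < m := by omega
  constructor
  · rintro (⟨ha, hb⟩ | ⟨ha, hb⟩)
    · rw [fN_small hzm] at ha; omega
    · rcases Nat.lt_or_ge (w : ℕ) m with h | h
      · rw [fN_small h] at ha; omega
      · rw [fN_large (by omega)] at ha; omega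
  · intro h
    rcases h with h | h | h
    · left
      refine ⟨?_, by omega⟩
      rw [fN_small hzm]; omega
    · right
      refine ⟨?_, by omega⟩
      rw [fN_large (by omega)]; omega
    · right
      refine ⟨?_, by omega⟩
      rw [fN_large (by omega)]; omega

lemma ncard_triple {α : Type} {a b c : α} (hab : a ≠ b) (hac : a ≠ c) (hbc : b ≠ c) :
    ({a, b, c} : Set α).ncard = 3 := by
  rw [Set.ncard_insert_of_notMem (by simp [hab, hac]) (Set.toFinite _),
    Set.ncard_pair hbc]

/-- degrees: 1 for leaves, 3 for spine -/
lemma catT_deg {m : ℕ} (hm : 2 ≤ m) (z : Fin (2 * m + 2)) :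
    ((catT m).neighborSet z).ncard = if m ≤ (z : ℕ) then 1 else 3 := by
  rcases Nat.lt_or_ge (z : ℕ) m with h | h
  · rw [if_neg (by omega)]
    rcases Nat.eq_zero_or_pos (z : ℕ) with h0 | h0
    · rw [nb_root hm z h0]
      exact ncard_triple (by simp [Fin.ext_iff]; try omega) (by simp [Fin.ext_iff]; try omega)
        (by simp [Fin.ext_iff]; try omega)
    · rcases Nat.lt_or_ge (z : ℕ) (m - 1) with h1 | h1
      · rw [nb_mid hm z (by omega) (by omega)]
        exact ncard_triple (by simp [Fin.ext_iff]; try omega) (by simp [Fin.ext_iff]; try omega)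
          (by simp [Fin.ext_iff]; try omega)
      · rw [nb_end hm z (by omega)]
        exact ncard_triple (by simp [Fin.ext_iff]; try omega) (by simp [Fin.ext_iff]; try omega)
          (by simp [Fin.ext_iff]; try omega)
  · rw [if_pos h, nb_leaf hm z h]
    exact Set.ncard_singleton _

/-- the caterpillar branch decomposition -/
def catBD (V : Type) [Fintype V] (hV : 4 ≤ Fintype.card V) : BranchDecomp V where
  β := Fin (2 * (Fintype.card V - 2) + 2)
  finβ := inferInstance
  T := catT (Fintype.card V - 2)
  connected := catT_connected (by omega)
  acyclic := catT_acyclic (by omega)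
  subcubic := fun x => by
    rw [catT_deg (by omega) x]
    split_ifs <;> simp
  L := fun v => ⟨(Fintype.card V - 2) + ((Fintype.equivFin V) v : ℕ), by
    have := ((Fintype.equivFin V) v).isLt; omega⟩
  inj := fun v1 v2 h => by
    have hval := congrArg Fin.val h
    simp only at hval
    have : ((Fintype.equivFin V) v1 : ℕ) = ((Fintype.equivFin V) v2 : ℕ) := by omega
    exact (Fintype.equivFin V).injective (Fin.ext this)
  leaves := fun x => by
    have hm : 2 ≤ Fintype.card V - 2 := by omega
    rw [catT_deg hm x]
    split_ifs with h
    · constructor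
      · intro _
        refine ⟨(Fintype.equivFin V).symm
          ⟨(x : ℕ) - (Fintype.card V - 2), by have := x.isLt; omega⟩, ?_⟩
        apply Fin.ext
        simp only [Equiv.apply_symm_apply]
        have := x.isLt
        omega
      · intro _; rfl
    · constructor
      · intro hcontra; omega
      · rintro ⟨v, hv⟩
        have hval := congrArg Fin.val hv
        simp only at hval
        omega
lemma mim_le_card {V : Type} [Fintype V] {G : SimpleGraph V} {A : Set V} {m : ℕ}
    (h : IsMimMatching G A m) : m ≤ Fintype.card V := by
  obtain ⟨a, b, ha, _, _, _, _⟩ := h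
  calc m = Fintype.card (Fin m) := (Fintype.card_fin m).symm
    _ ≤ _ := Fintype.card_le_of_injective a ha

lemma mimval_le_card {V : Type} [Fintype V] (G : SimpleGraph V) (A : Set V) :
    mimval G A ≤ Fintype.card V :=
  csSup_le' (fun _ hm => mim_le_card hm)

end AuxProof


/-- for `p ≥ 4`, the `(4p × 3p)` column-clique grid is a co-comparability
graph, and it is an `n = 12p²`-vertex co-comparability graph of mim-width at least
`√(n/12)`; hence co-comparability graphs have unbounded mim-width. -/
theorem stmt9 (p : ℕ) (hp : 4 ≤ p) :
    (∃ σ : Fin (12 * p ^ 2) ≃ Fin (4 * p) × Fin (3 * p),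
        IsCoCompOrdering (ccGrid (4 * p) (3 * p)) σ) ∧
    Real.sqrt ((12 * p ^ 2 : ℝ) / 12) ≤ (mimw (ccGrid (4 * p) (3 * p)) : ℝ) := by
  constructor
  · exact part1 p hp
  · have hcard : Fintype.card (Fin (4 * p) × Fin (3 * p)) = 12 * p * p := by
      rw [Fintype.card_prod, Fintype.card_fin, Fintype.card_fin]; ring
    have hmain : p ≤ mimw (ccGrid (4 * p) (3 * p)) := by
      have hSne : {w | ∃ D : BranchDecomp (Fin (4 * p) × Fin (3 * p)),
          ∀ x y, D.T.Adj x y → mimval (ccGrid (4 * p) (3 * p)) (D.cut x y) ≤ w}.Nonempty := by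
        refine ⟨Fintype.card (Fin (4 * p) × Fin (3 * p)),
          catBD _ (by rw [hcard]; nlinarith [hp]), fun x y _ => mimval_le_card _ _⟩
      have hall : ∀ w ∈ {w | ∃ D : BranchDecomp (Fin (4 * p) × Fin (3 * p)),
          ∀ x y, D.T.Adj x y → mimval (ccGrid (4 * p) (3 * p)) (D.cut x y) ≤ w}, p ≤ w := by
        rintro w ⟨D, hD⟩
        obtain ⟨x, y, hxy, h1, h2⟩ := sepExists D (4 * p * p)
          (by nlinarith [hp]) (le_of_eq_of_le (by ring) (le_of_eq hcard.symm))
        rw [cut_compl D hxy] at h2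
        have hmm := comb_main p hp (D.cut x y) h1 h2
        have hle : p ≤ mimval (ccGrid (4 * p) (3 * p)) (D.cut x y) :=
          le_csSup ⟨Fintype.card (Fin (4 * p) × Fin (3 * p)),
            fun _ hm => mim_le_card hm⟩ hmm
        exact le_trans hle (hD x y hxy)
      exact hall _ (Nat.sInf_mem hSne)
    have h12 : (12 * (p : ℝ) ^ 2) / 12 = (p : ℝ) ^ 2 := by ring
    rw [h12, Real.sqrt_sq (by positivity)]
    exact_mod_cast hmain
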